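/- Let Λ be a finite box, π the product Bernoulli(p) measure on {0,1}^Λ, and let 0 = t_0 < t_1 < ⋯ < t_n < t_{n+1} = t. For i = 0,…,n let 𝓛^{(i)} be the generator of the East-like process on Λ with (possibly non-ergodic) boundary condition η_{t_i}, each self-adjoint in L²(Λ, π), and suppose λ > 0 is such that whenever η_{t_i}(y) = 0 (for a fixed boundary vertex y ∈ ∂_E Λ) the spectral gap of 𝓛^{(i)} is at least λ. Then for every f : {0,1}^Λ → ℝ with π(f) = 0 and ‖f‖_∞ ≤ 1, ‖e^{t_1 𝓛^{(0)}} e^{(t_2−t_1) 𝓛^{(1)}} ⋯ e^{(t−t_n) 𝓛^{(n)}} f‖_{L²(π)} ≤ exp[−λ Σ_{i=0}^n (t_{i+1} − t_i) 1(η_{t_i}(y) = 0)]. -/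

import Mathlib

open MeasureTheory ProbabilityTheory Set

noncomputable section

/-- Sites of the lattice `ℤ^d`. -/
abbrev Site (d : ℕ) := Fin d → ℤ

/-- Spin configurations: `true` = particle (spin 1), `false` = vacancy (spin 0). -/
abbrev Config (d : ℕ) := Site d → Bool

/-- The canonical basis vector `e i` of `ℤ^d`. -/
def basisVec (d : ℕ) (i : Fin d) : Site d := fun j => if j = i then 1 else 0

/-- The East constraint at `x`: some site `x - e`, with `e` a canonical basis
vector, carries a vacancy. -/
def constraintAt {d : ℕ} (x : Site d) (η : Config d) : Prop :=
  ∃ i : Fin d, η (x - basisVec d i) = false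

/-- The East boundary `∂_E X` of a set of sites. -/
def eastBdry {d : ℕ} (X : Set (Site d)) : Set (Site d) :=
  {y | y ∉ X ∧ ∃ i : Fin d, y + basisVec d i ∈ X}

/-- Sample space of the graphical construction: at each site, a sequence of clock
ring times together with a sequence of coin tosses. -/
abbrev GSpace (d : ℕ) := Site d → (ℕ → ℝ) × (ℕ → Bool)

/-- The `n`-th clock ring time `t_{x,n}` at site `x`. -/
def ringT {d : ℕ} (θ : GSpace d) (x : Site d) (n : ℕ) : ℝ := (θ x).1 n

/-- The `n`-th coin toss `s_{x,n}` at site `x`. -/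
def coinT {d : ℕ} (θ : GSpace d) (x : Site d) (n : ℕ) : Bool := (θ x).2 n

/-- Interarrival times of the clock rings at a site. -/
def gapT {d : ℕ} (θ : GSpace d) (x : Site d) : ℕ → ℝ
  | 0 => ringT θ x 0
  | n + 1 => ringT θ x (n + 1) - ringT θ x n

/-- The exponential law of rate `1` on `ℝ`. -/
def expLaw : Measure ℝ :=
  MeasureTheory.volume.withDensity fun s =>
    ENNReal.ofReal (if 0 ≤ s then Real.exp (-s) else 0)

/-- The Bernoulli(`p`) law on `ℝ` (mass `p` at `1`, mass `1-p` at `0`). -/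
def bernoulliReal (p : ℝ) : Measure ℝ :=
  ENNReal.ofReal p • Measure.dirac 1 + ENNReal.ofReal (1 - p) • Measure.dirac 0

/-- The Bernoulli(`p`) law on `Bool` (probability `p` of a particle). -/
def bernoulliBool (p : ℝ) : Measure Bool :=
  ENNReal.ofReal p • Measure.dirac true + ENNReal.ofReal (1 - p) • Measure.dirac false

/-- The elementary random variables of the graphical construction: interarrival
times of the Poisson clocks (left) and coin tosses (right, coded as `0`/`1`). -/
def elemVar (d : ℕ) : (Site d × ℕ) ⊕ (Site d × ℕ) → GSpace d → ℝ
  | .inl (x, n) => fun θ => gapT θ x n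
  | .inr (x, n) => fun θ => if coinT θ x n then 1 else 0

/-- The East-like process with parameter `p` on the region `R ⊆ ℤ^d` (the spins
outside `R` are frozen, playing the role of a boundary condition; `R = univ`
gives the process on all of `ℤ^d`), presented through its graphical
construction: `μ` is the law of the clock rings and coin tosses (rate-one
Poisson processes and i.i.d. Bernoulli(`p`) variables, all independent), and
`path η θ t` is the configuration at time `t` of the pathwise solution started
from `η`, driven by the noise `θ`: spins in `R` are resampled by the coin
tosses exactly at the legal rings (rings at which the East constraint holds). -/
structure EastProcess (d : ℕ) (p : ℝ) (R : Set (Site d)) : Type where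
  μ : Measure (GSpace d)
  isProb : IsProbabilityMeasure μ
  indep : iIndepFun (elemVar d) μ
  gap_law : ∀ x n, μ.map (fun θ => gapT θ x n) = expLaw
  coin_law : ∀ x n, μ.map (elemVar d (.inr (x, n))) = bernoulliReal p
  path : Config d → GSpace d → ℝ → Config d
  path_meas : ∀ η t, Measurable fun θ => path η θ t
  path_jointly_meas : ∀ η x, Measurable fun q : GSpace d × ℝ => path η q.1 q.2 x
  path_props : ∀ η : Config d, ∀ᵐ θ ∂μ,
    (∀ t : ℝ, t ≤ 0 → path η θ t = η) ∧
    (∀ y ∉ R, ∀ t : ℝ, path η θ t y = η y) ∧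
    (∀ x ∈ R, ∀ n : ℕ, 0 < ringT θ x n →
      constraintAt x (path η θ (ringT θ x n)) →
        path η θ (ringT θ x n) x = coinT θ x n) ∧
    (∀ x ∈ R, ∀ s t : ℝ, 0 ≤ s → s ≤ t →
      (∀ n : ℕ, ringT θ x n ∈ Set.Ioc s t →
        ¬ constraintAt x (path η θ (ringT θ x n))) →
        path η θ t x = path η θ s x)

open Classical in
/-- The information (rings and coin tosses) at the sites of `Λ` up to time `t`. -/
def infoUpTo (d : ℕ) (Λ : Set (Site d)) (t : ℝ) (θ : GSpace d) :
    Site d → ℕ → (ℝ × Bool) ⊕ Unit := fun x n =>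
  if x ∈ Λ ∧ ringT θ x n ≤ t then Sum.inl (ringT θ x n, coinT θ x n) else Sum.inr ()

/-- The σ-algebra `ℱ_{Λ,t}` generated by the clock rings and coin tosses at the
vertices of `Λ` up to time `t`. -/
def sigmaUpTo (d : ℕ) (Λ : Set (Site d)) (t : ℝ) : MeasurableSpace (GSpace d) :=
  MeasurableSpace.comap (infoUpTo d Λ t) inferInstance

/-- `𝒯_t(x)`: total time spent at `0` by the spin at `x` up to time `t`, for the
process started from `ζ` and driven by the noise `θ`. -/
def vacancyTime {d : ℕ} {p : ℝ} {R : Set (Site d)} (G : EastProcess d p R)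
    (ζ : Config d) (x : Site d) (t : ℝ) (θ : GSpace d) : ℝ :=
  ∫ s in (0:ℝ)..t, (if G.path ζ θ s x = false then (1:ℝ) else 0)

/-- The quadrant `ℤ^d_+`. -/
def quadrant (d : ℕ) : Set (Site d) := {y | ∀ i, 0 ≤ y i}

/-- The box `[1,L]^d` as a set of sites. -/
def boxSet (d L : ℕ) : Set (Site d) := {y | ∀ i, 1 ≤ y i ∧ y i ≤ (L : ℤ)}

/-- The box `[1,L]^d` as a finite set of sites. -/
def boxFinset (d L : ℕ) : Finset (Site d) :=
  Fintype.piFinset fun _ : Fin d => Finset.Icc (1 : ℤ) (L : ℤ)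

open Classical in
/-- The configuration equal to `η` on `R` and to the boundary condition `σb`
outside `R`. -/
def withBC {d : ℕ} (R : Set (Site d)) (σb η : Config d) : Config d :=
  fun y => if y ∈ R then η y else σb y

/-- The minimal boundary condition for `ℤ^d_+`: a single vacancy at `-e`. -/
def minBC (d : ℕ) (e : Fin d) : Config d := fun y => !(decide (y = -(basisVec d e)))

end

noncomputable section

/-- Spin configurations on a finite set `Λ` of sites. -/
abbrev FConfig {d : ℕ} (Λ : Finset (Site d)) := ↥Λ → Bool

open Classical in
/-- The configuration `σ·η`, equal to `η` on `Λ` and to the boundary condition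
`σb` outside. -/
def fullConf {d : ℕ} (Λ : Finset (Site d)) (σb : Config d) (η : FConfig Λ) : Config d :=
  fun y => if h : y ∈ Λ then η ⟨y, h⟩ else σb y

/-- The finite-volume East constraint `c_x^{Λ,σ}`. -/
def fconstraint {d : ℕ} (Λ : Finset (Site d)) (σb : Config d) (x : ↥Λ)
    (η : FConfig Λ) : Prop :=
  ∃ i : Fin d, fullConf Λ σb η ((x : Site d) - basisVec d i) = false

open Classical in
/-- The generator `𝓛^σ_Λ` of the East-like process on `Λ` with boundary
condition `σb`:
`𝓛f(η) = Σ_{x ∈ Λ} c_x^{Λ,σ}(η) [π_x(f) - f](η)`. -/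
def eastGen (d : ℕ) (p : ℝ) (Λ : Finset (Site d)) (σb : Config d) :
    (FConfig Λ → ℝ) →ₗ[ℝ] (FConfig Λ → ℝ) where
  toFun f := fun η => ∑ x : ↥Λ,
    (if fconstraint Λ σb x η then (1 : ℝ) else 0) *
      (p * f (Function.update η x true) + (1 - p) * f (Function.update η x false) - f η)
  map_add' f g := by
    funext η
    simp only [Pi.add_apply]
    rw [← Finset.sum_add_distrib]
    refine Finset.sum_congr rfl fun x _ => ?_
    ring
  map_smul' c f := by
    funext η
    simp only [RingHom.id_apply, Pi.smul_apply, smul_eq_mul]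
    rw [Finset.mul_sum]
    refine Finset.sum_congr rfl fun x _ => ?_
    ring

/-- The generator as a continuous linear operator (the configuration space is
finite, hence the function space is finite dimensional). -/
def eastGenL (d : ℕ) (p : ℝ) (Λ : Finset (Site d)) (σb : Config d) :
    (FConfig Λ → ℝ) →L[ℝ] (FConfig Λ → ℝ) :=
  LinearMap.toContinuousLinearMap (eastGen d p Λ σb)

/-- The weight of a configuration under the product Bernoulli(`p`) measure `π`. -/
def piWeight (p : ℝ) {ι : Type*} [DecidableEq ι] [Fintype ι] (η : ι → Bool) : ℝ :=
  ∏ x, if η x then p else 1 - p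

/-- The mean `π(f)`. -/
def piMean (p : ℝ) {ι : Type*} [DecidableEq ι] [Fintype ι] (f : (ι → Bool) → ℝ) : ℝ :=
  ∑ η, piWeight p η * f η

/-- The variance `Var_π(f)`. -/
def piVar (p : ℝ) {ι : Type*} [DecidableEq ι] [Fintype ι] (f : (ι → Bool) → ℝ) : ℝ :=
  ∑ η, piWeight p η * (f η - piMean p f) ^ 2

/-- The norm of `L²(π)`. -/
def piNorm (p : ℝ) {ι : Type*} [DecidableEq ι] [Fintype ι] (f : (ι → Bool) → ℝ) : ℝ :=
  Real.sqrt (∑ η, piWeight p η * f η ^ 2)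

/-- The entropy `Ent_π(g) = π(g log g) - π(g) log π(g)`. -/
def piEnt (p : ℝ) {ι : Type*} [DecidableEq ι] [Fintype ι] (g : (ι → Bool) → ℝ) : ℝ :=
  (∑ η, piWeight p η * g η * Real.log (g η)) -
    (∑ η, piWeight p η * g η) * Real.log (∑ η, piWeight p η * g η)

/-- The Dirichlet form `⟨f, -A f⟩_π` of a generator `A`, w.r.t. `π`. -/
def dirichletForm (p : ℝ) {ι : Type*} [DecidableEq ι] [Fintype ι]
    (A : ((ι → Bool) → ℝ) →L[ℝ] ((ι → Bool) → ℝ)) (f : (ι → Bool) → ℝ) : ℝ :=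
  -(∑ η, piWeight p η * f η * A f η)

/-- The spectral gap of a (reversible) generator: the infimum over non-constant
`f` of the ratio of the Dirichlet form of `f` to its variance. -/
def specGap (p : ℝ) {ι : Type*} [DecidableEq ι] [Fintype ι]
    (A : ((ι → Bool) → ℝ) →L[ℝ] ((ι → Bool) → ℝ)) : ℝ :=
  sInf {r : ℝ | ∃ f, piVar p f ≠ 0 ∧ r = dirichletForm p A f / piVar p f}

/-- The logarithmic Sobolev constant: the infimum over non-constant `f` of the
ratio of the Dirichlet form of `f` to the entropy of `f²`. -/
def logSobolevConst (p : ℝ) {ι : Type*} [DecidableEq ι] [Fintype ι]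
    (A : ((ι → Bool) → ℝ) →L[ℝ] ((ι → Bool) → ℝ)) : ℝ :=
  sInf {r : ℝ | ∃ f, piEnt p (fun η => f η ^ 2) ≠ 0 ∧
    r = dirichletForm p A f / piEnt p (fun η => f η ^ 2)}

/-! ### Auxiliary lemmas -/

section Aux

variable {ι : Type*} [DecidableEq ι] [Fintype ι]

omit [DecidableEq ι] in
lemma piWeight_nonneg' {p : ℝ} (hp : 0 ≤ p) (hp1 : p ≤ 1) (η : ι → Bool)
    [DecidableEq ι] : 0 ≤ piWeight p η :=
  Finset.prod_nonneg fun x _ => by split <;> linarith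

lemma piWeight_sum_one' (p : ℝ) : ∑ η : ι → Bool, piWeight p η = 1 := by
  classical
  have h := Finset.prod_univ_sum (fun _ : ι => (Finset.univ : Finset Bool))
    (fun _ b => if b then p else 1 - p)
  simp only [Fintype.piFinset_univ] at h
  unfold piWeight
  rw [← h]
  simp

lemma piWeight_update' (p : ℝ) (η : ι → Bool) (x : ι) (b : Bool) :
    piWeight p (Function.update η x b)
      = (if b then p else 1 - p) * ∏ z ∈ Finset.univ.erase x, (if η z then p else 1 - p) := by
  rw [piWeight, ← Finset.mul_prod_erase _ _ (Finset.mem_univ x), Function.update_self]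
  congr 1
  refine Finset.prod_congr rfl fun z hz => ?_
  rw [Function.update_of_ne (Finset.ne_of_mem_erase hz)]

lemma piWeight_eq' (p : ℝ) (η : ι → Bool) (x : ι) :
    piWeight p η
      = (if η x then p else 1 - p) * ∏ z ∈ Finset.univ.erase x, (if η z then p else 1 - p) := by
  conv_lhs => rw [← Function.update_eq_self x η, piWeight_update']

/-- Key per-site symmetrization lemma. -/
lemma site_sym (p : ℝ) (x : ι) (c : (ι → Bool) → ℝ)
    (hc : ∀ η b, c (Function.update η x b) = c η) (f g : (ι → Bool) → ℝ) :
    ∑ η : ι → Bool, piWeight p η * (c η *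
        (p * g (Function.update η x true) + (1-p) * g (Function.update η x false) - g η)) * f η
    = -(p*(1-p)) * ∑ η : ι → Bool, piWeight p η * c η *
        ((f (Function.update η x true) - f (Function.update η x false)) *
         (g (Function.update η x true) - g (Function.update η x false))) := by
  classical
  set T : (ι → Bool) → (ι → Bool) := fun η => Function.update η x (!(η x)) with hT
  have hTinv : Function.Involutive T := by
    intro η
    funext z
    by_cases hz : z = x
    · subst hz; simp [T]
    · simp [T, Function.update_of_ne hz]
  set F : (ι → Bool) → ℝ := fun η => piWeight p η * (c η *
        (p * g (Function.update η x true) + (1-p) * g (Function.update η x false) - g η)) * f η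
    with hF
  set G : (ι → Bool) → ℝ := fun η => piWeight p η * c η *
        ((f (Function.update η x true) - f (Function.update η x false)) *
         (g (Function.update η x true) - g (Function.update η x false))) with hG
  have hsumF : ∑ η, F (T η) = ∑ η, F η :=
    Fintype.sum_bijective T hTinv.bijective (fun η => F (T η)) F (fun _ => rfl)
  have hsumG : ∑ η, G (T η) = ∑ η, G η :=
    Fintype.sum_bijective T hTinv.bijective (fun η => G (T η)) G (fun _ => rfl)
  have key : ∀ η, F η + F (T η) = -(p*(1-p)) * (G η + G (T η)) := by
    intro η
    have hup : ∀ b b', Function.update (Function.update η x b) x b' = Function.update η x b' :=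
      fun b b' => Function.update_idem ..
    have hupT : ∀ b', Function.update (T η) x b' = Function.update η x b' :=
      fun b' => Function.update_idem ..
    have hcT : c (T η) = c η := hc η _
    have hwη := piWeight_eq' p η x
    have hwT : piWeight p (T η)
        = (if !(η x) then p else 1 - p) * ∏ z ∈ Finset.univ.erase x, (if η z then p else 1 - p) :=
      piWeight_update' p η x _
    have hfη : f η = f (Function.update η x (η x)) := by rw [Function.update_eq_self]
    have hgη : g η = g (Function.update η x (η x)) := by rw [Function.update_eq_self]
    have hfT : f (T η) = f (Function.update η x (!(η x))) := rfl
    have hgT : g (T η) = g (Function.update η x (!(η x))) := rfl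
    simp only [hF, hG, hcT, hup, hupT]
    rw [hwη, hwT, hfη, hgη, hfT, hgT]
    cases hb : η x <;>
      simp only [hb, Bool.not_true, Bool.not_false, Bool.false_eq_true, Bool.true_eq_false,
        if_true, if_false] <;> ring
  have h2 : (2:ℝ) * ∑ η, F η = -(p*(1-p)) * ((2:ℝ) * ∑ η, G η) := by
    have h3 : ∑ η, (F η + F (T η)) = ∑ η, -(p*(1-p)) * (G η + G (T η)) :=
      Finset.sum_congr rfl fun η _ => key η
    rw [Finset.sum_add_distrib, hsumF, ← Finset.mul_sum, Finset.sum_add_distrib, hsumG] at h3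
    linarith
  linarith

lemma piVar_eq' (p : ℝ) (f : (ι → Bool) → ℝ) :
    piVar p f = (∑ η, piWeight p η * f η ^ 2) - (piMean p f) ^ 2 := by
  have h1 : piVar p f = ∑ η, (piWeight p η * f η ^ 2
      - 2 * piMean p f * (piWeight p η * f η) + (piMean p f) ^ 2 * piWeight p η) :=
    Finset.sum_congr rfl fun η _ => by ring
  rw [h1, Finset.sum_add_distrib, Finset.sum_sub_distrib, ← Finset.mul_sum, ← Finset.mul_sum,
    piWeight_sum_one']
  rw [show ∑ η, piWeight p η * f η = piMean p f from rfl]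
  ring

omit [DecidableEq ι] in
lemma piVar_nonneg' {p : ℝ} (hp : 0 ≤ p) (hp1 : p ≤ 1) (f : (ι → Bool) → ℝ)
    [DecidableEq ι] : 0 ≤ piVar p f :=
  Finset.sum_nonneg fun η _ => mul_nonneg (piWeight_nonneg' hp hp1 η) (sq_nonneg _)

end Aux

section EastAux

variable {d : ℕ} {p : ℝ} {Λ : Finset (Site d)} {σb : Config d}

lemma basisVec_sub_ne (x : Site d) (i : Fin d) : x - basisVec d i ≠ x := by
  intro h
  have := congrFun h i
  simp [basisVec, sub_eq_self] at this

lemma fullConf_update_ne (η : FConfig Λ) (x : ↥Λ) (b : Bool) (z : Site d)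
    (hz : z ≠ (x : Site d)) :
    fullConf Λ σb (Function.update η x b) z = fullConf Λ σb η z := by
  unfold fullConf
  split
  · next h =>
      rw [Function.update_of_ne]
      intro hh
      exact hz (congrArg Subtype.val hh)
  · rfl

lemma fconstraint_update (η : FConfig Λ) (x : ↥Λ) (b : Bool) :
    fconstraint Λ σb x (Function.update η x b) ↔ fconstraint Λ σb x η := by
  unfold fconstraint
  refine exists_congr fun i => ?_
  rw [fullConf_update_ne η x b _ (basisVec_sub_ne _ i)]

open Classical in
lemma eastGen_apply (f : FConfig Λ → ℝ) (η : FConfig Λ) :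
    eastGen d p Λ σb f η = ∑ x : ↥Λ,
      (if fconstraint Λ σb x η then (1 : ℝ) else 0) *
        (p * f (Function.update η x true) + (1 - p) * f (Function.update η x false) - f η) :=
  rfl

open Classical in
/-- The symmetric representation of the bilinear form of the East generator. -/
lemma eastGen_sym (f g : FConfig Λ → ℝ) :
    ∑ η : FConfig Λ, piWeight p η * f η * eastGen d p Λ σb g η
      = -(p*(1-p)) * ∑ x : ↥Λ, ∑ η : FConfig Λ, piWeight p η *
          (if fconstraint Λ σb x η then (1:ℝ) else 0) *
          ((f (Function.update η x true) - f (Function.update η x false)) *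
           (g (Function.update η x true) - g (Function.update η x false))) := by
  classical
  have h1 : ∑ η : FConfig Λ, piWeight p η * f η * eastGen d p Λ σb g η
      = ∑ x : ↥Λ, ∑ η : FConfig Λ, piWeight p η *
          ((if fconstraint Λ σb x η then (1:ℝ) else 0) *
            (p * g (Function.update η x true) + (1-p) * g (Function.update η x false) - g η))
          * f η := by
    rw [Finset.sum_comm]
    refine Finset.sum_congr rfl fun η _ => ?_
    rw [eastGen_apply, Finset.mul_sum]
    refine Finset.sum_congr rfl fun x _ => ?_
    ring
  rw [h1, Finset.mul_sum]
  refine Finset.sum_congr rfl fun x _ => ?_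
  rw [site_sym p x (fun η => if fconstraint Λ σb x η then (1:ℝ) else 0)
    (fun η b => by
      refine if_congr ?_ rfl rfl
      exact fconstraint_update η x b) f g]

open Classical in
lemma eastGen_selfadj (f g : FConfig Λ → ℝ) :
    ∑ η : FConfig Λ, piWeight p η * f η * eastGen d p Λ σb g η
      = ∑ η : FConfig Λ, piWeight p η * g η * eastGen d p Λ σb f η := by
  rw [eastGen_sym, eastGen_sym]
  congr 1
  refine Finset.sum_congr rfl fun x _ => Finset.sum_congr rfl fun η _ => by ring

lemma eastGen_one : eastGen d p Λ σb (fun _ => 1) = 0 := by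
  funext η
  show (∑ x : ↥Λ, _) = (0:ℝ)
  refine Finset.sum_eq_zero fun x _ => by ring

lemma eastGenL_apply (f : FConfig Λ → ℝ) :
    eastGenL d p Λ σb f = eastGen d p Λ σb f := rfl

open Classical in
lemma dirichlet_nonneg (hp : 0 ≤ p) (hp1 : p ≤ 1) (f : FConfig Λ → ℝ) :
    0 ≤ dirichletForm p (eastGenL d p Λ σb) f := by
  rw [dirichletForm]
  simp only [eastGenL_apply]
  rw [eastGen_sym]
  rw [neg_mul, neg_neg]
  refine mul_nonneg (mul_nonneg hp (by linarith)) ?_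
  refine Finset.sum_nonneg fun x _ => Finset.sum_nonneg fun η _ => ?_
  refine mul_nonneg (mul_nonneg (piWeight_nonneg' hp hp1 η) ?_) ?_
  · split <;> norm_num
  · exact mul_self_nonneg _

end EastAux

section Contract

variable {ι : Type*} [DecidableEq ι] [Fintype ι]

set_option synthInstance.maxHeartbeats 1000000 in
set_option maxHeartbeats 1000000 in
/-- Semigroup contraction in `L²(π)` from a spectral-gap-type inequality. -/
lemma exp_contract (p : ℝ) (hp : 0 < p) (hp1 : p < 1)
    (A : ((ι → Bool) → ℝ) →L[ℝ] ((ι → Bool) → ℝ))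
    (hsym : ∀ f g : (ι → Bool) → ℝ,
      ∑ η, piWeight p η * f η * A g η = ∑ η, piWeight p η * g η * A f η)
    (hA1 : A (fun _ => 1) = 0)
    (γ : ℝ) (hγ : 0 ≤ γ)
    (hD : ∀ g, γ * piVar p g ≤ dirichletForm p A g)
    (s : ℝ) (hs : 0 ≤ s) (f : (ι → Bool) → ℝ) (hf : piMean p f = 0) :
    piMean p (NormedSpace.exp (s • A) f) = 0 ∧
      piNorm p (NormedSpace.exp (s • A) f) ≤ Real.exp (-(γ * s)) * piNorm p f := by
  classical
  set φ : ℝ → ((ι → Bool) → ℝ) := fun u => NormedSpace.exp (u • A) f with hφ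
  have hφ0 : φ 0 = f := by
    simp [hφ, NormedSpace.exp_zero]
  have hφd : ∀ u, HasDerivAt φ (A (φ u)) u := by
    intro u
    have h1 := hasDerivAt_exp_smul_const' (𝕂 := ℝ) A u
    have h2 := h1.clm_apply (hasDerivAt_const u f)
    simpa [ContinuousLinearMap.mul_apply] using h2
  have hcoord : ∀ u (η : ι → Bool), HasDerivAt (fun v => φ v η) (A (φ u) η) u := by
    intro u η
    exact (ContinuousLinearMap.proj (R := ℝ)
      (φ := fun _ : ι → Bool => ℝ) η).hasFDerivAt.comp_hasDerivAt u (hφd u)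
  -- the mean is preserved
  set m : ℝ → ℝ := fun u => piMean p (φ u) with hm
  have hmd : ∀ u, HasDerivAt m 0 u := by
    intro u
    have h1 : HasDerivAt m (∑ η, piWeight p η * A (φ u) η) u := by
      refine HasDerivAt.fun_sum fun η _ => ?_
      exact (hcoord u η).const_mul (piWeight p η)
    have h0 : ∑ η, piWeight p η * A (φ u) η = 0 := by
      have h2 := hsym (fun _ => 1) (φ u)
      simp only [hA1, Pi.zero_apply, mul_zero, Finset.sum_const_zero, mul_one] at h2
      simpa using h2
    rwa [h0] at h1
  have hmconst : ∀ u, m u = 0 := by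
    intro u
    have h1 : m u = m 0 :=
      is_const_of_deriv_eq_zero (fun v => (hmd v).differentiableAt)
        (fun v => (hmd v).deriv) u 0
    rw [h1, hm]
    simp only []
    rw [hφ0]
    exact hf
  constructor
  · have := hmconst s
    rw [hm] at this
    exact this
  -- the squared norm
  set N : ℝ → ℝ := fun u => ∑ η, piWeight p η * φ u η ^ 2 with hN
  have hNd : ∀ u, HasDerivAt N (-(2 * dirichletForm p A (φ u))) u := by
    intro u
    have h1 : HasDerivAt N (∑ η, piWeight p η * ((2:ℕ) * φ u η ^ 1 * A (φ u) η)) u := by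
      refine HasDerivAt.fun_sum fun η _ => ?_
      exact ((hcoord u η).pow 2).const_mul (piWeight p η)
    have h2 : ∑ η, piWeight p η * ((2:ℕ) * φ u η ^ 1 * A (φ u) η)
        = -(2 * dirichletForm p A (φ u)) := by
      rw [dirichletForm, mul_neg, neg_neg, Finset.mul_sum]
      refine Finset.sum_congr rfl fun η _ => by push_cast; ring
    rwa [h2] at h1
  have hvar : ∀ u, piVar p (φ u) = N u := by
    intro u
    rw [piVar_eq']
    have h1 : piMean p (φ u) = 0 := by have := hmconst u; rwa [hm] at this
    rw [h1, hN]
    ring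
  have hNineq : ∀ u, -(2 * dirichletForm p A (φ u)) ≤ -(2*γ) * N u := by
    intro u
    have h1 := hD (φ u)
    rw [hvar u] at h1
    linarith
  set h : ℝ → ℝ := fun u => N u * Real.exp (2*γ*u) with hh
  have hhd : ∀ u, HasDerivAt h ((-(2 * dirichletForm p A (φ u))) * Real.exp (2*γ*u)
      + N u * (Real.exp (2*γ*u) * (2*γ))) u := by
    intro u
    refine (hNd u).mul ?_
    have h1 : HasDerivAt (fun v : ℝ => 2*γ*v) (2*γ) u := by
      simpa using (hasDerivAt_id u).const_mul (2*γ)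
    exact (Real.hasDerivAt_exp (2*γ*u)).comp u h1
  have hderiv_nonpos : ∀ u, deriv h u ≤ 0 := by
    intro u
    rw [(hhd u).deriv]
    have h1 := hNineq u
    have h2 : (0:ℝ) < Real.exp (2*γ*u) := Real.exp_pos _
    have h3 := mul_le_mul_of_nonneg_right h1 h2.le
    nlinarith [h3]
  have hanti : Antitone h :=
    antitone_of_deriv_nonpos (fun u => (hhd u).differentiableAt) hderiv_nonpos
  have hfinal : N s ≤ Real.exp (-(2*γ*s)) * N 0 := by
    have h1 : h s ≤ h 0 := hanti hs
    rw [hh] at h1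
    simp only [mul_zero, Real.exp_zero, mul_one] at h1
    calc N s = N s * Real.exp (2*γ*s) * Real.exp (-(2*γ*s)) := by
              rw [mul_assoc, ← Real.exp_add]; simp
      _ ≤ N 0 * Real.exp (-(2*γ*s)) :=
          mul_le_mul_of_nonneg_right h1 (Real.exp_pos _).le
      _ = Real.exp (-(2*γ*s)) * N 0 := mul_comm _ _
  have hN0 : N 0 = ∑ η, piWeight p η * f η ^ 2 := by simp only [hN]; rw [hφ0]
  have hgoal : piNorm p (φ s) ≤ Real.exp (-(γ * s)) * piNorm p f := by
    rw [piNorm, piNorm]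
    have hsq : Real.exp (-(γ*s)) * Real.sqrt (∑ η, piWeight p η * f η ^ 2)
        = Real.sqrt (Real.exp (-(2*γ*s)) * ∑ η, piWeight p η * f η ^ 2) := by
      have h1 : Real.exp (-(2*γ*s)) = Real.exp (-(γ*s)) ^ 2 := by
        rw [sq, ← Real.exp_add]; ring_nf
      rw [h1, Real.sqrt_mul (sq_nonneg _), Real.sqrt_sq (Real.exp_nonneg _)]
    rw [hsq]
    apply Real.sqrt_le_sqrt
    rw [← hN0]
    exact hfinal
  exact hgoal

end Contract

/-- **Equation (4.4) in the proof of Theorem 4.3.**  Let `Λ` be a finite box and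
`0 = t_0 < t_1 < ⋯ < t_n < t_{n+1} = t`.  For `i = 0, …, n` let `𝓛^{(i)}` be the
generator of the East-like process on `Λ` with boundary condition `σ i`
(self-adjoint in `L²(Λ,π)`), and let `λ > 0` be such that whenever the boundary
spin at the fixed vertex `y ∈ ∂_E Λ` is `0`, the spectral gap of `𝓛^{(i)}` is at
least `λ`.  Then for every `f` with `π(f) = 0` and `‖f‖_∞ ≤ 1`,
`‖e^{t₁𝓛^{(0)}} e^{(t₂-t₁)𝓛^{(1)}} ⋯ e^{(t-t_n)𝓛^{(n)}} f‖_π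
  ≤ exp(-λ Σ_{i=0}^n (t_{i+1}-t_i) 1(σ_i(y) = 0))`. -/
theorem east_semigroup_contraction
    (d : ℕ) (hd : 0 < d) (p : ℝ) (hp : 0 < p) (hp1 : p < 1)
    (Λ : Finset (Site d)) (a b : Site d)
    (hbox : Λ = Fintype.piFinset fun i => Finset.Icc (a i) (b i))
    (y : Site d) (hy : y ∈ eastBdry (↑Λ : Set (Site d)))
    (n : ℕ) (t : ℝ) (τ : ℕ → ℝ)
    (hτ0 : τ 0 = 0) (hτlast : τ (n + 1) = t)
    (hτmono : ∀ i ≤ n, τ i < τ (i + 1))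
    (σ : ℕ → Config d)
    (lam : ℝ) (hlam : 0 < lam)
    (hgap : ∀ i ≤ n, σ i y = false → lam ≤ specGap p (eastGenL d p Λ (σ i)))
    (f : FConfig Λ → ℝ) (hmean : piMean p f = 0) (hbdd : ∀ η, |f η| ≤ 1) :
    piNorm p
      (((List.range (n + 1)).foldr
          (fun i A =>
            (NormedSpace.exp ((τ (i + 1) - τ i) • eastGenL d p Λ (σ i))).comp A)
          (ContinuousLinearMap.id ℝ (FConfig Λ → ℝ))) f)
      ≤ Real.exp (-(lam * ∑ i ∈ Finset.range (n + 1),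
          (τ (i + 1) - τ i) * (if σ i y = false then 1 else 0))) := by
  classical
  have hp0 : (0:ℝ) ≤ p := hp.le
  have hp1' : p ≤ 1 := hp1.le
  set γ : ℕ → ℝ := fun i => if σ i y = false then lam else 0 with hγdef
  have hγ0 : ∀ i, 0 ≤ γ i := by
    intro i
    rw [hγdef]
    dsimp only
    split
    · exact hlam.le
    · exact le_rfl
  have hDi : ∀ i, i ≤ n → ∀ g : FConfig Λ → ℝ,
      γ i * piVar p g ≤ dirichletForm p (eastGenL d p Λ (σ i)) g := by
    intro i hi g
    by_cases hσ : σ i y = false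
    · rw [hγdef]
      dsimp only
      rw [if_pos hσ]
      by_cases hv : piVar p g = 0
      · rw [hv, mul_zero]
        exact dirichlet_nonneg hp0 hp1' g
      · have hvpos : 0 < piVar p g := lt_of_le_of_ne (piVar_nonneg' hp0 hp1' g) (Ne.symm hv)
        have hmem : dirichletForm p (eastGenL d p Λ (σ i)) g / piVar p g ∈
            {r : ℝ | ∃ f, piVar p f ≠ 0 ∧
              r = dirichletForm p (eastGenL d p Λ (σ i)) f / piVar p f} :=
          ⟨g, hv, rfl⟩
        have hbdd2 : BddBelow {r : ℝ | ∃ f, piVar p f ≠ 0 ∧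
            r = dirichletForm p (eastGenL d p Λ (σ i)) f / piVar p f} := by
          refine ⟨0, fun r hr => ?_⟩
          obtain ⟨f', hf', hr⟩ := hr
          rw [hr]
          exact div_nonneg (dirichlet_nonneg hp0 hp1' f') (piVar_nonneg' hp0 hp1' f')
        have h2 : lam ≤ dirichletForm p (eastGenL d p Λ (σ i)) g / piVar p g :=
          le_trans (hgap i hi hσ) (csInf_le hbdd2 hmem)
        exact (le_div_iff₀ hvpos).mp h2
    · rw [hγdef]
      dsimp only
      rw [if_neg hσ, zero_mul]
      exact dirichlet_nonneg hp0 hp1' g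
  have step : ∀ i, i ≤ n → ∀ g : FConfig Λ → ℝ, piMean p g = 0 →
      piMean p (NormedSpace.exp ((τ (i+1) - τ i) • eastGenL d p Λ (σ i)) g) = 0 ∧
      piNorm p (NormedSpace.exp ((τ (i+1) - τ i) • eastGenL d p Λ (σ i)) g)
        ≤ Real.exp (-(γ i * (τ (i+1) - τ i))) * piNorm p g := by
    intro i hi g hg
    refine exp_contract p hp hp1 _ ?_ ?_ (γ i) (hγ0 i) (hDi i hi) _ ?_ g hg
    · exact fun f g => eastGen_selfadj f g
    · exact eastGen_one
    · have := hτmono i hi; linarith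
  have main : ∀ m, m ≤ n + 1 → ∀ B : (FConfig Λ → ℝ) →L[ℝ] (FConfig Λ → ℝ),
      piMean p (B f) = 0 →
      piNorm p (((List.range m).foldr
          (fun i A =>
            (NormedSpace.exp ((τ (i + 1) - τ i) • eastGenL d p Λ (σ i))).comp A) B) f)
        ≤ Real.exp (-(lam * ∑ i ∈ Finset.range m,
            (τ (i + 1) - τ i) * (if σ i y = false then 1 else 0))) * piNorm p (B f) := by
    intro m
    induction m with
    | zero =>
      intro _ B hB
      simp
    | succ m ih =>
      intro hm B hB
      have hm' : m ≤ n + 1 := Nat.le_of_succ_le hm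
      have hmn : m ≤ n := Nat.succ_le_succ_iff.mp hm
      rw [List.range_succ, List.foldr_append]
      simp only [List.foldr_cons, List.foldr_nil]
      set B' := (NormedSpace.exp ((τ (m + 1) - τ m) • eastGenL d p Λ (σ m))).comp B with hB'
      have hB'f : B' f = NormedSpace.exp ((τ (m+1) - τ m) • eastGenL d p Λ (σ m)) (B f) := rfl
      have hstep := step m hmn (B f) hB
      have h1 := ih hm' B' (by rw [hB'f]; exact hstep.1)
      have h2 : piNorm p (B' f) ≤ Real.exp (-(γ m * (τ (m+1) - τ m))) * piNorm p (B f) := by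
        rw [hB'f]; exact hstep.2
      calc piNorm p (((List.range m).foldr
            (fun i A =>
              (NormedSpace.exp ((τ (i + 1) - τ i) • eastGenL d p Λ (σ i))).comp A) B') f)
          ≤ Real.exp (-(lam * ∑ i ∈ Finset.range m,
              (τ (i + 1) - τ i) * (if σ i y = false then 1 else 0))) * piNorm p (B' f) := h1
        _ ≤ Real.exp (-(lam * ∑ i ∈ Finset.range m,
              (τ (i + 1) - τ i) * (if σ i y = false then 1 else 0))) *
            (Real.exp (-(γ m * (τ (m+1) - τ m))) * piNorm p (B f)) :=
            mul_le_mul_of_nonneg_left h2 (Real.exp_nonneg _)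
        _ = Real.exp (-(lam * ∑ i ∈ Finset.range (m+1),
              (τ (i + 1) - τ i) * (if σ i y = false then 1 else 0))) * piNorm p (B f) := by
            rw [← mul_assoc, ← Real.exp_add, Finset.sum_range_succ]
            congr 2
            rw [hγdef]
            dsimp only
            by_cases hσ : σ m y = false
            · rw [if_pos hσ, if_pos hσ]; ring
            · rw [if_neg hσ, if_neg hσ]; ring
  have hid : piMean p ((ContinuousLinearMap.id ℝ (FConfig Λ → ℝ)) f) = 0 := by
    simpa using hmean
  have h := main (n+1) le_rfl (ContinuousLinearMap.id ℝ (FConfig Λ → ℝ)) hid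
  have hnorm1 : piNorm p ((ContinuousLinearMap.id ℝ (FConfig Λ → ℝ)) f) ≤ 1 := by
    rw [ContinuousLinearMap.id_apply, piNorm]
    have h2 : ∑ η, piWeight p η * f η ^ 2 ≤ 1 := by
      have h3 : ∑ η, piWeight p η * f η ^ 2 ≤ ∑ η : FConfig Λ, piWeight p η * 1 := by
        refine Finset.sum_le_sum fun η _ => ?_
        refine mul_le_mul_of_nonneg_left ?_ (piWeight_nonneg' hp0 hp1' η)
        have h4 := abs_le.mp (hbdd η)
        nlinarith [h4.1, h4.2]
      have h5 : ∑ η : FConfig Λ, piWeight p η * 1 = 1 := by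
        simp [piWeight_sum_one']
      linarith
    calc Real.sqrt (∑ η, piWeight p η * f η ^ 2) ≤ Real.sqrt 1 := Real.sqrt_le_sqrt h2
      _ = 1 := Real.sqrt_one
  calc piNorm p (((List.range (n + 1)).foldr
        (fun i A =>
          (NormedSpace.exp ((τ (i + 1) - τ i) • eastGenL d p Λ (σ i))).comp A)
        (ContinuousLinearMap.id ℝ (FConfig Λ → ℝ))) f)
      ≤ Real.exp (-(lam * ∑ i ∈ Finset.range (n + 1),
          (τ (i + 1) - τ i) * (if σ i y = false then 1 else 0))) *
        piNorm p ((ContinuousLinearMap.id ℝ (FConfig Λ → ℝ)) f) := h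
    _ ≤ Real.exp (-(lam * ∑ i ∈ Finset.range (n + 1),
          (τ (i + 1) - τ i) * (if σ i y = false then 1 else 0))) * 1 :=
        mul_le_mul_of_nonneg_left hnorm1 (Real.exp_nonneg _)
    _ = _ := mul_one _

end
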